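/- In the regular pentagon K with vertices k_i = Rot_{2πi/5}(1,0), set u = cos(π/5). The quadrilateral with vertices p₂ = ¼k₀ + ¾k₁, p₃ = ((3−2u)/4)k₁ + ((1+2u)/4)k₂, p₅ = ((1+2u)/4)k₃ + ((3−2u)/4)k₄, p₆ = ¾k₄ + ¼k₀ is a parallelogram inscribed in K whose sides p₂p₃ and p₆p₅ are parallel to the segment p₁p₄ (p₁ = k₀, p₄ = ½(k₂+k₃)) and have exactly half its length. -/

import Mathlib

open Real

/-- The vertices of the regular pentagon: `k i = Rot_{2πi/5}(1, 0)`. -/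
noncomputable def pentVtx (i : ℕ) : EuclideanSpace ℝ (Fin 2) :=
  (WithLp.equiv 2 (Fin 2 → ℝ)).symm ![Real.cos (2 * π * i / 5), Real.sin (2 * π * i / 5)]

/-- The regular pentagon. -/
noncomputable def pentagon : Set (EuclideanSpace ℝ (Fin 2)) :=
  convexHull ℝ {pentVtx 0, pentVtx 1, pentVtx 2, pentVtx 3, pentVtx 4}

lemma pentagon_isClosed : IsClosed pentagon := (Set.toFinite _).isClosed_convexHull (𝕜 := ℝ)

lemma mem_frontier_of_maximal {S : Set (EuclideanSpace ℝ (Fin 2))}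
    (hS : IsClosed S) {n p : EuclideanSpace ℝ (Fin 2)} (hn : n ≠ 0) (hp : p ∈ S)
    (hle : ∀ x ∈ S, (inner ℝ n x : ℝ) ≤ (inner ℝ n p : ℝ)) : p ∈ frontier S := by
  rw [frontier, hS.closure_eq]
  refine Set.mem_diff_of_mem hp (fun hint => ?_)
  obtain ⟨ε, hε, hball⟩ := Metric.isOpen_iff.1 isOpen_interior p hint
  have hnn : (0:ℝ) < ‖n‖ := norm_pos_iff.2 hn
  have hq : p + (ε / (2 * ‖n‖)) • n ∈ S := by
    refine interior_subset (hball ?_)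
    rw [Metric.mem_ball, dist_eq_norm, add_sub_cancel_left, norm_smul, Real.norm_eq_abs,
      abs_of_pos (by positivity)]
    rw [div_mul_eq_mul_div, mul_comm 2 ‖n‖, ← div_div, mul_div_assoc, div_self (ne_of_gt hnn),
      mul_one]
    linarith
  have h2 := hle _ hq
  rw [inner_add_right, real_inner_smul_right, real_inner_self_eq_norm_sq] at h2
  have hpos : 0 < ε / (2 * ‖n‖) * ‖n‖ ^ 2 := by positivity
  linarith

lemma pent_le {n : EuclideanSpace ℝ (Fin 2)} {c : ℝ}
    (h0 : (inner ℝ n (pentVtx 0) : ℝ) ≤ c) (h1 : (inner ℝ n (pentVtx 1) : ℝ) ≤ c)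
    (h2 : (inner ℝ n (pentVtx 2) : ℝ) ≤ c) (h3 : (inner ℝ n (pentVtx 3) : ℝ) ≤ c)
    (h4 : (inner ℝ n (pentVtx 4) : ℝ) ≤ c) : ∀ x ∈ pentagon, (inner ℝ n x : ℝ) ≤ c := by
  have hcvx : Convex ℝ {y : EuclideanSpace ℝ (Fin 2) | (inner ℝ n y : ℝ) ≤ c} :=
    convex_halfSpace_le ⟨fun a b => inner_add_right n a b,
      fun r a => by rw [real_inner_smul_right, smul_eq_mul]⟩ c
  have hsub : ({pentVtx 0, pentVtx 1, pentVtx 2, pentVtx 3, pentVtx 4} :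
      Set (EuclideanSpace ℝ (Fin 2))) ⊆ {y | (inner ℝ n y : ℝ) ≤ c} :=
    Set.insert_subset_iff.mpr ⟨h0, Set.insert_subset_iff.mpr ⟨h1,
      Set.insert_subset_iff.mpr ⟨h2, Set.insert_subset_iff.mpr ⟨h3,
        Set.singleton_subset_iff.mpr h4⟩⟩⟩⟩
  exact fun x hx => convexHull_min hsub hcvx hx

lemma pentVtx_mem (i : ℕ) (hi : i < 5) : pentVtx i ∈ pentagon := by
  apply subset_convexHull ℝ
  interval_cases i
  · exact Set.mem_insert _ _
  · exact Set.mem_insert_of_mem _ (Set.mem_insert _ _)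
  · exact Set.mem_insert_of_mem _ (Set.mem_insert_of_mem _ (Set.mem_insert _ _))
  · exact Set.mem_insert_of_mem _ (Set.mem_insert_of_mem _ (Set.mem_insert_of_mem _
      (Set.mem_insert _ _)))
  · exact Set.mem_insert_of_mem _ (Set.mem_insert_of_mem _ (Set.mem_insert_of_mem _
      (Set.mem_insert_of_mem _ rfl)))

lemma frontier_helper (a b : ℝ) (p : EuclideanSpace ℝ (Fin 2)) (hab : a ≠ 0 ∨ b ≠ 0)
    (hp : p ∈ pentagon)
    (h0 : a * pentVtx 0 0 + b * pentVtx 0 1 ≤ a * p 0 + b * p 1)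
    (h1 : a * pentVtx 1 0 + b * pentVtx 1 1 ≤ a * p 0 + b * p 1)
    (h2 : a * pentVtx 2 0 + b * pentVtx 2 1 ≤ a * p 0 + b * p 1)
    (h3 : a * pentVtx 3 0 + b * pentVtx 3 1 ≤ a * p 0 + b * p 1)
    (h4 : a * pentVtx 4 0 + b * pentVtx 4 1 ≤ a * p 0 + b * p 1) :
    p ∈ frontier pentagon := by
  set nv : EuclideanSpace ℝ (Fin 2) := (WithLp.equiv 2 (Fin 2 → ℝ)).symm ![a, b] with hnv
  have hinner : ∀ x : EuclideanSpace ℝ (Fin 2), (inner ℝ nv x : ℝ) = a * x 0 + b * x 1 := by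
    intro x
    simp only [PiLp.inner_apply, RCLike.inner_apply, conj_trivial, Fin.sum_univ_two]
    rw [show nv 0 = a from rfl, show nv 1 = b from rfl]
    ring
  have hne : nv ≠ 0 := by
    intro h
    rcases hab with h' | h'
    · exact h' (by rw [show a = nv 0 from rfl, h]; rfl)
    · exact h' (by rw [show b = nv 1 from rfl, h]; rfl)
  refine mem_frontier_of_maximal pentagon_isClosed hne hp (pent_le ?_ ?_ ?_ ?_ ?_) <;>
    rw [hinner, hinner]
  exacts [h0, h1, h2, h3, h4]

set_option maxHeartbeats 2000000 in
/-- The quadrilateral `p₂p₃p₅p₆` (with `u = cos(π/5)`) is a parallelogram inscribed in the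
regular pentagon whose sides `p₂p₃` and `p₆p₅` are parallel to the affine diameter `p₁p₄`
(`p₁ = k₀`, `p₄ = ½(k₂ + k₃)`) and have exactly half its length. -/
theorem pentagon_half_length_parallelogram :
    let u : ℝ := Real.cos (π / 5)
    let p₁ := pentVtx 0
    let p₄ := (1 / 2 : ℝ) • (pentVtx 2 + pentVtx 3)
    let p₂ := (1 / 4 : ℝ) • pentVtx 0 + (3 / 4 : ℝ) • pentVtx 1
    let p₃ := ((3 - 2 * u) / 4) • pentVtx 1 + ((1 + 2 * u) / 4) • pentVtx 2
    let p₅ := ((1 + 2 * u) / 4) • pentVtx 3 + ((3 - 2 * u) / 4) • pentVtx 4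
    let p₆ := (3 / 4 : ℝ) • pentVtx 4 + (1 / 4 : ℝ) • pentVtx 0
    (p₃ - p₂ = p₅ - p₆) ∧
      (∃ t : ℝ, p₃ - p₂ = t • (p₄ - p₁)) ∧
      ‖p₃ - p₂‖ = ‖p₄ - p₁‖ / 2 ∧ ‖p₅ - p₆‖ = ‖p₄ - p₁‖ / 2 ∧
      p₂ ∈ frontier pentagon ∧ p₃ ∈ frontier pentagon ∧
      p₅ ∈ frontier pentagon ∧ p₆ ∈ frontier pentagon := by
  intro u p₁ p₄ p₂ p₃ p₅ p₆
  set s : ℝ := Real.sin (π / 5) with hs_def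
  have hq : 4 * u ^ 2 - 2 * u - 1 = 0 := Real.quadratic_root_cos_pi_div_five
  have hup : 0 < u := by
    have := Real.pi_pos
    exact Real.cos_pos_of_mem_Ioo ⟨by linarith, by linarith⟩
  have hu1 : u ≤ 1 := Real.cos_le_one _
  have hsp : 0 < s := by
    have := Real.pi_pos
    exact Real.sin_pos_of_pos_of_lt_pi (by linarith) (by linarith)
  have hpy : s ^ 2 = 1 - u ^ 2 := by
    have := Real.sin_sq_add_cos_sq (π / 5); linarith
  -- coordinates of the vertices
  have k00 : pentVtx 0 0 = 1 := by
    rw [show pentVtx 0 0 = Real.cos (2 * π * (0:ℕ) / 5) from rfl]; norm_num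
  have k01 : pentVtx 0 1 = 0 := by
    rw [show pentVtx 0 1 = Real.sin (2 * π * (0:ℕ) / 5) from rfl]; norm_num
  have k10 : pentVtx 1 0 = 2 * u ^ 2 - 1 := by
    rw [show pentVtx 1 0 = Real.cos (2 * π * (1:ℕ) / 5) from rfl,
      show (2 * π * (1:ℕ) / 5 : ℝ) = 2 * (π / 5) by push_cast; ring, Real.cos_two_mul]
  have k11 : pentVtx 1 1 = 2 * s * u := by
    rw [show pentVtx 1 1 = Real.sin (2 * π * (1:ℕ) / 5) from rfl,
      show (2 * π * (1:ℕ) / 5 : ℝ) = 2 * (π / 5) by push_cast; ring, Real.sin_two_mul]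
  have k20 : pentVtx 2 0 = -u := by
    rw [show pentVtx 2 0 = Real.cos (2 * π * (2:ℕ) / 5) from rfl,
      show (2 * π * (2:ℕ) / 5 : ℝ) = π - π / 5 by push_cast; ring, Real.cos_pi_sub]
  have k21 : pentVtx 2 1 = s := by
    rw [show pentVtx 2 1 = Real.sin (2 * π * (2:ℕ) / 5) from rfl,
      show (2 * π * (2:ℕ) / 5 : ℝ) = π - π / 5 by push_cast; ring, Real.sin_pi_sub]
  have k30 : pentVtx 3 0 = -u := by
    rw [show pentVtx 3 0 = Real.cos (2 * π * (3:ℕ) / 5) from rfl,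
      show (2 * π * (3:ℕ) / 5 : ℝ) = π + π / 5 by push_cast; ring, Real.cos_add,
      Real.cos_pi, Real.sin_pi]
    ring
  have k31 : pentVtx 3 1 = -s := by
    rw [show pentVtx 3 1 = Real.sin (2 * π * (3:ℕ) / 5) from rfl,
      show (2 * π * (3:ℕ) / 5 : ℝ) = π + π / 5 by push_cast; ring, Real.sin_add,
      Real.cos_pi, Real.sin_pi]
    ring
  have k40 : pentVtx 4 0 = 2 * u ^ 2 - 1 := by
    rw [show pentVtx 4 0 = Real.cos (2 * π * (4:ℕ) / 5) from rfl,
      show (2 * π * (4:ℕ) / 5 : ℝ) = 2 * π - 2 * (π / 5) by push_cast; ring,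
      Real.cos_two_pi_sub, Real.cos_two_mul]
  have k41 : pentVtx 4 1 = -(2 * s * u) := by
    rw [show pentVtx 4 1 = Real.sin (2 * π * (4:ℕ) / 5) from rfl,
      show (2 * π * (4:ℕ) / 5 : ℝ) = 2 * π - 2 * (π / 5) by push_cast; ring,
      Real.sin_two_pi_sub, Real.sin_two_mul]
  have hq1 : 4 * u ^ 3 - 2 * u ^ 2 - u = 0 := by linear_combination u * hq
  have hq2 : 4 * u ^ 4 - 2 * u ^ 3 - u ^ 2 = 0 := by linear_combination u ^ 2 * hq
  have hpy1 : s ^ 2 * u = u - u ^ 3 := by linear_combination u * hpy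
  have hpy2 : s ^ 2 * u ^ 2 = u ^ 2 - u ^ 4 := by linear_combination u ^ 2 * hpy
  -- the key parallelogram identities
  have key1 : p₃ - p₂ = ((1:ℝ) / 2) • (p₄ - p₁) := by
    show ((3 - 2 * u) / 4) • pentVtx 1 + ((1 + 2 * u) / 4) • pentVtx 2
        - ((1 / 4 : ℝ) • pentVtx 0 + (3 / 4 : ℝ) • pentVtx 1)
      = ((1:ℝ) / 2) • ((1 / 2 : ℝ) • (pentVtx 2 + pentVtx 3) - pentVtx 0)
    ext i
    fin_cases i
    · simp only [PiLp.sub_apply, PiLp.add_apply, PiLp.smul_apply, smul_eq_mul, Fin.isValue,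
        Fin.zero_eta, k00, k10, k20, k30]
      linear_combination ((-u - 1) / 4) * hq
    · simp only [PiLp.sub_apply, PiLp.add_apply, PiLp.smul_apply, smul_eq_mul, Fin.isValue,
        Fin.mk_one, k01, k11, k21, k31]
      linear_combination (-(s / 4)) * hq
  have key2 : p₅ - p₆ = ((1:ℝ) / 2) • (p₄ - p₁) := by
    show ((1 + 2 * u) / 4) • pentVtx 3 + ((3 - 2 * u) / 4) • pentVtx 4
        - ((3 / 4 : ℝ) • pentVtx 4 + (1 / 4 : ℝ) • pentVtx 0)
      = ((1:ℝ) / 2) • ((1 / 2 : ℝ) • (pentVtx 2 + pentVtx 3) - pentVtx 0)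
    ext i
    fin_cases i
    · simp only [PiLp.sub_apply, PiLp.add_apply, PiLp.smul_apply, smul_eq_mul, Fin.isValue,
        Fin.zero_eta, k00, k40, k20, k30]
      linear_combination ((-u - 1) / 4) * hq
    · simp only [PiLp.sub_apply, PiLp.add_apply, PiLp.smul_apply, smul_eq_mul, Fin.isValue,
        Fin.mk_one, k01, k41, k21, k31]
      linear_combination (s / 4) * hq
  refine ⟨key1.trans key2.symm, ⟨1/2, key1⟩, ?_, ?_, ?_, ?_, ?_, ?_⟩
  · rw [key1, norm_smul, Real.norm_eq_abs, abs_of_pos (by norm_num : (0:ℝ) < 1/2)]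
    ring
  · rw [key2, norm_smul, Real.norm_eq_abs, abs_of_pos (by norm_num : (0:ℝ) < 1/2)]
    ring
  · -- p₂ on edge k0k1
    refine frontier_helper (u + 1/2) (2*s*u) ((1/4:ℝ) • pentVtx 0 + (3/4:ℝ) • pentVtx 1)
      (Or.inl (ne_of_gt (by linarith))) ((convex_convexHull ℝ _) (pentVtx_mem 0 (by norm_num))
        (pentVtx_mem 1 (by norm_num)) (by norm_num) (by norm_num) (by norm_num))
      ?_ ?_ ?_ ?_ ?_ <;>
    · simp only [PiLp.add_apply, PiLp.smul_apply, smul_eq_mul,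
        k00, k01, k10, k11, k20, k21, k30, k31, k40, k41]
      nlinarith [hq, hq1, hq2, hpy, hpy1, hpy2, hup, hsp, hu1]
  · -- p₃ on edge k1k2
    refine frontier_helper (-(1/2)) (2*s*u + s)
      (((3 - 2*u)/4) • pentVtx 1 + ((1 + 2*u)/4) • pentVtx 2)
      (Or.inl (by norm_num)) ((convex_convexHull ℝ _) (pentVtx_mem 1 (by norm_num))
        (pentVtx_mem 2 (by norm_num)) (by linarith) (by linarith) (by ring))
      ?_ ?_ ?_ ?_ ?_ <;>
    · simp only [PiLp.add_apply, PiLp.smul_apply, smul_eq_mul,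
        k00, k01, k10, k11, k20, k21, k30, k31, k40, k41]
      nlinarith [hq, hq1, hq2, hpy, hpy1, hpy2, hup, hsp, hu1]
  · -- p₅ on edge k3k4
    refine frontier_helper (-(1/2)) (-(2*s*u + s))
      (((1 + 2*u)/4) • pentVtx 3 + ((3 - 2*u)/4) • pentVtx 4)
      (Or.inl (by norm_num)) ((convex_convexHull ℝ _) (pentVtx_mem 3 (by norm_num))
        (pentVtx_mem 4 (by norm_num)) (by linarith) (by linarith) (by ring))
      ?_ ?_ ?_ ?_ ?_ <;>
    · simp only [PiLp.add_apply, PiLp.smul_apply, smul_eq_mul,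
        k00, k01, k10, k11, k20, k21, k30, k31, k40, k41]
      nlinarith [hq, hq1, hq2, hpy, hpy1, hpy2, hup, hsp, hu1]
  · -- p₆ on edge k4k0
    refine frontier_helper (u + 1/2) (-(2*s*u)) ((3/4:ℝ) • pentVtx 4 + (1/4:ℝ) • pentVtx 0)
      (Or.inl (ne_of_gt (by linarith))) ((convex_convexHull ℝ _) (pentVtx_mem 4 (by norm_num))
        (pentVtx_mem 0 (by norm_num)) (by norm_num) (by norm_num) (by norm_num))
      ?_ ?_ ?_ ?_ ?_ <;>
    · simp only [PiLp.add_apply, PiLp.smul_apply, smul_eq_mul,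
        k00, k01, k10, k11, k20, k21, k30, k31, k40, k41]
      nlinarith [hq, hq1, hq2, hpy, hpy1, hpy2, hup, hsp, hu1]
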